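/- (Uniqueness of the symmetric solution up to symmetry class.) Let (K₁, K₂, L₁, L₂) and (K₁', K₂', L₁', L₂') be two parameter vectors in ℝ⁴ and let r, r' ∈ (0,1) be symmetric solutions for them, i.e., r = V((K₁ + L₁)·r) = V((K₂ + L₂)·r) and r' = V((K₁' + L₁')·r') = V((K₂' + L₂')·r'). Then r = r' if and only if K₁ + L₁ = K₁' + L₁'. In particular, for each C > 2, the symmetric synchronization level r(C), defined as the solution in (0,1) of r = V(C·r), is unique, and the map C ↦ r(C) is strictly increasing on (2, ∞). -/

import Mathlib

open Real Set

/-- The function `V(x) = (∫ cos θ e^{x cos θ} dθ) / (∫ e^{x cos θ} dθ)` over `[0, 2π]`. -/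
noncomputable def V (x : ℝ) : ℝ :=
  (∫ θ in (0:ℝ)..(2 * π), Real.cos θ * Real.exp (x * Real.cos θ)) /
  (∫ θ in (0:ℝ)..(2 * π), Real.exp (x * Real.cos θ))

open MeasureTheory


noncomputable def DD (x : ℝ) : ℝ := ∫ θ in (0:ℝ)..(2*π), Real.exp (x * Real.cos θ)
noncomputable def NN (x : ℝ) : ℝ := ∫ θ in (0:ℝ)..(2*π), Real.cos θ * Real.exp (x * Real.cos θ)
noncomputable def MM (x : ℝ) : ℝ := ∫ θ in (0:ℝ)..(2*π), (Real.cos θ)^2 * Real.exp (x * Real.cos θ)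

lemma intable (f : ℝ → ℝ) (hf : Continuous f) (x a b : ℝ) :
    IntervalIntegrable (fun θ => f θ * Real.exp (x * Real.cos θ)) volume a b :=
  ((hf.mul (by fun_prop)) : Continuous _).intervalIntegrable a b

lemma integral_pos_of_nonneg_of_pos_at {q : ℝ → ℝ} {a b θ₀ : ℝ} (hq : Continuous q)
    (h0 : ∀ t, 0 ≤ q t) (hθ : θ₀ ∈ Ioo a b) (hpos : 0 < q θ₀) :
    0 < ∫ t in a..b, q t := by
  have hab : a < b := hθ.1.trans hθ.2
  rw [intervalIntegral.integral_pos_iff_support_of_nonneg_ae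
    (Filter.Eventually.of_forall h0) (hq.intervalIntegrable a b)]
  refine ⟨hab, ?_⟩
  have hopen : IsOpen (Function.support q ∩ Ioo a b) :=
    (isOpen_ne.preimage hq).inter isOpen_Ioo
  have hne : (Function.support q ∩ Ioo a b).Nonempty :=
    ⟨θ₀, Function.mem_support.2 hpos.ne', hθ⟩
  calc (0:ENNReal) < volume (Function.support q ∩ Ioo a b) := hopen.measure_pos volume hne
    _ ≤ volume (Function.support q ∩ Ioc a b) := by
        apply measure_mono; exact inter_subset_inter_right _ Ioo_subset_Ioc_self

lemma var_pos (x : ℝ) (hD : 0 < DD x) : 0 < MM x * DD x - NN x ^ 2 := by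
  set m := NN x / DD x with hm
  have hsplit : ∀ θ : ℝ, (Real.cos θ - m)^2 * Real.exp (x * Real.cos θ) =
      (Real.cos θ)^2 * Real.exp (x * Real.cos θ)
      - (2*m) * (Real.cos θ * Real.exp (x * Real.cos θ))
      + m^2 * Real.exp (x * Real.cos θ) := by intro θ; ring
  have hI1 : IntervalIntegrable (fun θ => (Real.cos θ)^2 * Real.exp (x * Real.cos θ)) volume 0 (2*π) := (by fun_prop : Continuous _).intervalIntegrable _ _
  have hI2 : IntervalIntegrable (fun θ => (2*m) * (Real.cos θ * Real.exp (x * Real.cos θ))) volume 0 (2*π) := (by fun_prop : Continuous _).intervalIntegrable _ _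
  have hI3 : IntervalIntegrable (fun θ => m^2 * Real.exp (x * Real.cos θ)) volume 0 (2*π) := (by fun_prop : Continuous _).intervalIntegrable _ _
  have hint : (∫ θ in (0:ℝ)..(2*π), (Real.cos θ - m)^2 * Real.exp (x * Real.cos θ))
      = MM x - 2*m*NN x + m^2 * DD x := by
    simp only [hsplit]
    rw [intervalIntegral.integral_add (hI1.sub hI2) hI3,
      intervalIntegral.integral_sub hI1 hI2,
      intervalIntegral.integral_const_mul, intervalIntegral.integral_const_mul]
    rw [MM, NN, DD]
  have hq : 0 < ∫ θ in (0:ℝ)..(2*π), (Real.cos θ - m)^2 * Real.exp (x * Real.cos θ) := by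
    rcases eq_or_ne m (-1) with hm1 | hm1
    · refine integral_pos_of_nonneg_of_pos_at (by fun_prop) (fun t => by positivity) (θ₀ := π/2) ⟨by positivity, by nlinarith [pi_pos]⟩ ?_
      rw [Real.cos_pi_div_two, hm1]
      positivity
    · refine integral_pos_of_nonneg_of_pos_at (by fun_prop) (fun t => by positivity) (θ₀ := π) ⟨pi_pos, by nlinarith [pi_pos]⟩ ?_
      rw [Real.cos_pi]
      have h1 : (-1 - m) ≠ 0 := fun h => hm1 (by linarith [sub_eq_zero.mp h])
      positivity
  rw [hint] at hq
  have e1 : m * DD x = NN x := div_mul_cancel₀ _ hD.ne'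
  have e2 : m^2 * DD x^2 = NN x^2 := by rw [← e1]; ring
  have e3 : m * NN x * DD x = NN x^2 := by rw [← e1]; ring
  nlinarith [mul_pos hD hq, e1, e2, e3]

lemma DD_pos (x : ℝ) : 0 < DD x := by
  apply intervalIntegral.intervalIntegral_pos_of_pos_on
  · exact (by fun_prop : Continuous fun θ => Real.exp (x * Real.cos θ)).intervalIntegrable _ _
  · intro θ _; exact Real.exp_pos _
  · positivity

lemma deriv_under (f : ℝ → ℝ) (hf : Continuous f) (hb : ∀ t, |f t| ≤ 1) (x₀ : ℝ) :
    HasDerivAt (fun x => ∫ θ in (0:ℝ)..(2*π), f θ * Real.exp (x * Real.cos θ))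
      (∫ θ in (0:ℝ)..(2*π), f θ * Real.cos θ * Real.exp (x₀ * Real.cos θ)) x₀ := by
  have key := intervalIntegral.hasDerivAt_integral_of_dominated_loc_of_deriv_le
    (μ := volume) (a := 0) (b := 2*π) (s := Metric.ball x₀ 1)
    (F := fun x θ => f θ * Real.exp (x * Real.cos θ))
    (F' := fun x θ => f θ * Real.cos θ * Real.exp (x * Real.cos θ))
    (x₀ := x₀) (bound := fun _ => Real.exp (|x₀| + 1)) (Metric.ball_mem_nhds x₀ one_pos)
    ?_ ?_ ?_ ?_ ?_ ?_
  · exact key.2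
  · filter_upwards with x
    exact ((by fun_prop : Continuous fun θ => f θ * Real.exp (x * Real.cos θ))).aestronglyMeasurable
  · exact ((by fun_prop : Continuous fun θ => f θ * Real.exp (x₀ * Real.cos θ))).intervalIntegrable _ _
  · exact ((by fun_prop : Continuous fun θ => f θ * Real.cos θ * Real.exp (x₀ * Real.cos θ))).aestronglyMeasurable
  · filter_upwards with t _ x hx
    have h1 : |f t * Real.cos t| ≤ 1 := by
      rw [abs_mul]
      exact mul_le_one₀ (hb t) (abs_nonneg _) (abs_cos_le_one t)
    have h2 : x * Real.cos t ≤ |x₀| + 1 := by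
      have : |x - x₀| < 1 := by simpa [Real.dist_eq] using hx
      have hxb : |x| ≤ |x₀| + 1 := by
        have := abs_sub_abs_le_abs_sub x x₀; linarith
      calc x * Real.cos t ≤ |x * Real.cos t| := le_abs_self _
        _ = |x| * |Real.cos t| := abs_mul _ _
        _ ≤ (|x₀| + 1) * 1 := by
            apply mul_le_mul hxb (abs_cos_le_one t) (abs_nonneg _); positivity
        _ = |x₀| + 1 := mul_one _
    calc ‖f t * Real.cos t * Real.exp (x * Real.cos t)‖
        = |f t * Real.cos t| * Real.exp (x * Real.cos t) := by
          rw [norm_mul]; simp [Real.norm_eq_abs, Real.abs_exp, abs_mul]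
      _ ≤ 1 * Real.exp (|x₀| + 1) := by
          apply mul_le_mul h1 (Real.exp_le_exp.2 h2) (Real.exp_pos _).le one_pos.le
      _ = Real.exp (|x₀| + 1) := one_mul _
  · exact intervalIntegrable_const
  · filter_upwards with t _ x _
    have h : HasDerivAt (fun x : ℝ => x * Real.cos t) (Real.cos t) x := by
      simpa using (hasDerivAt_id x).mul_const (Real.cos t)
    have := (h.exp).const_mul (f t)
    refine this.congr_deriv ?_
    ring



lemma DD_hasDeriv (x : ℝ) : HasDerivAt DD (NN x) x := by
  have h := deriv_under (fun _ => 1) continuous_const (by simp) x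
  have h1 : (fun x => ∫ θ in (0:ℝ)..(2*π), (1:ℝ) * Real.exp (x * Real.cos θ)) = DD := by
    funext y; simp [DD]
  have h2 : (∫ θ in (0:ℝ)..(2*π), (1:ℝ) * Real.cos θ * Real.exp (x * Real.cos θ)) = NN x := by
    simp [NN]
  rwa [h1, h2] at h

lemma NN_hasDeriv (x : ℝ) : HasDerivAt NN (MM x) x := by
  have h := deriv_under Real.cos Real.continuous_cos (fun t => abs_cos_le_one t) x
  have h2 : (∫ θ in (0:ℝ)..(2*π), Real.cos θ * Real.cos θ * Real.exp (x * Real.cos θ)) = MM x := by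
    rw [MM]; apply intervalIntegral.integral_congr; intro θ _; ring
  rw [h2] at h
  exact h

lemma ibp (x : ℝ) : NN x = x * (DD x - MM x) := by
  have key : ∀ θ ∈ uIcc (0:ℝ) (2*π),
      HasDerivAt (fun θ => Real.sin θ * Real.exp (x * Real.cos θ))
        (Real.cos θ * Real.exp (x * Real.cos θ)
          - x * ((Real.sin θ)^2 * Real.exp (x * Real.cos θ))) θ := by
    intro θ _
    have hc : HasDerivAt (fun θ : ℝ => x * Real.cos θ) (x * (-Real.sin θ)) θ :=
      (Real.hasDerivAt_cos θ).const_mul x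
    have he := hc.exp
    have := (Real.hasDerivAt_sin θ).mul he
    refine this.congr_deriv ?_
    ring
  have hInt : IntervalIntegrable (fun θ => Real.cos θ * Real.exp (x * Real.cos θ)
      - x * ((Real.sin θ)^2 * Real.exp (x * Real.cos θ))) volume 0 (2*π) :=
    (by fun_prop : Continuous _).intervalIntegrable _ _
  have h0 := intervalIntegral.integral_eq_sub_of_hasDerivAt key hInt
  simp [Real.sin_two_pi] at h0
  have hsub : (∫ θ in (0:ℝ)..(2*π), (Real.cos θ * Real.exp (x * Real.cos θ)
      - x * ((Real.sin θ)^2 * Real.exp (x * Real.cos θ))))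
      = NN x - x * (DD x - MM x) := by
    rw [intervalIntegral.integral_sub ((by fun_prop : Continuous _).intervalIntegrable _ _)
      ((by fun_prop : Continuous _).intervalIntegrable _ _),
      intervalIntegral.integral_const_mul]
    have : (∫ θ in (0:ℝ)..(2*π), (Real.sin θ)^2 * Real.exp (x * Real.cos θ))
        = DD x - MM x := by
      rw [DD, MM, ← intervalIntegral.integral_sub
        ((by fun_prop : Continuous _).intervalIntegrable _ _)
        ((by fun_prop : Continuous _).intervalIntegrable _ _)]
      apply intervalIntegral.integral_congr; intro θ _
      have h := Real.sin_sq_add_cos_sq θ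
      simp only []
      linear_combination Real.exp (x * Real.cos θ) * h
    rw [NN, this]
  rw [hsub] at h0
  linarith




lemma V_eq (x : ℝ) : V x = NN x / DD x := rfl

lemma V_hasDeriv (x : ℝ) :
    HasDerivAt V ((MM x * DD x - NN x ^ 2) / (DD x)^2) x := by
  have h := (NN_hasDeriv x).div (DD_hasDeriv x) (DD_pos x).ne'
  refine h.congr_deriv ?_
  ring

lemma V_strictMono : StrictMono V := by
  apply strictMono_of_deriv_pos
  intro x
  rw [(V_hasDeriv x).deriv]
  exact div_pos (var_pos x (DD_pos x)) (pow_pos (DD_pos x) 2)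

lemma NN_zero : NN 0 = 0 := by
  simp [NN]

lemma V_zero : V 0 = 0 := by
  rw [V_eq, NN_zero, zero_div]

lemma V_lt_one (x : ℝ) : V x < 1 := by
  rw [V_eq, div_lt_one (DD_pos x)]
  have key : 0 < ∫ θ in (0:ℝ)..(2*π), (1 - Real.cos θ) * Real.exp (x * Real.cos θ) := by
    apply integral_pos_of_nonneg_of_pos_at (by fun_prop)
      (fun t => mul_nonneg (by nlinarith [Real.cos_le_one t]) (Real.exp_pos _).le)
      (θ₀ := π) ⟨pi_pos, by nlinarith [pi_pos]⟩
    rw [Real.cos_pi]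
    norm_num
    positivity
  have : (∫ θ in (0:ℝ)..(2*π), (1 - Real.cos θ) * Real.exp (x * Real.cos θ))
      = DD x - NN x := by
    rw [DD, NN, ← intervalIntegral.integral_sub
      ((by fun_prop : Continuous _).intervalIntegrable _ _)
      ((by fun_prop : Continuous _).intervalIntegrable _ _)]
    apply intervalIntegral.integral_congr; intro θ _; ring
  linarith [this ▸ key]

lemma V_cont : Continuous V :=
  continuous_iff_continuousAt.2 fun x => ((V_hasDeriv x).differentiableAt).continuousAt

lemma V_pos {x : ℝ} (hx : 0 < x) : 0 < V x := by
  have := V_strictMono hx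
  rwa [V_zero] at this

/-- The explicit subsolution. -/
noncomputable def W (x : ℝ) : ℝ := x / (1 + Real.sqrt (1 + x^2))

lemma u_sq (x : ℝ) : (Real.sqrt (1 + x^2))^2 = 1 + x^2 :=
  Real.sq_sqrt (by positivity)

lemma u_ge_one (x : ℝ) : 1 ≤ Real.sqrt (1 + x^2) := by
  nlinarith [u_sq x, Real.sqrt_nonneg (1 + x^2), sq_nonneg x]

lemma u_gt_one {x : ℝ} (hx : 0 < x) : 1 < Real.sqrt (1 + x^2) := by
  have h := u_sq x
  have h1 := u_ge_one x
  nlinarith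

lemma W_cont : Continuous W := by
  apply Continuous.div continuous_id
  · fun_prop
  · intro x
    have := u_ge_one x
    positivity

lemma W_hasDeriv (x : ℝ) :
    HasDerivAt W (1 / (Real.sqrt (1 + x^2) * (1 + Real.sqrt (1 + x^2)))) x := by
  set u := Real.sqrt (1 + x^2) with hu
  have hune : (1 + x^2) ≠ 0 := by positivity
  have hu1 : 1 ≤ u := u_ge_one x
  have hu2 : u^2 = 1 + x^2 := u_sq x
  have hupos : 0 < u := by linarith
  have hsq : HasDerivAt (fun x : ℝ => Real.sqrt (1 + x^2)) (x / u) x := by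
    have hin : HasDerivAt (fun x : ℝ => 1 + x^2) (2*x) x := by
      simpa using ((hasDerivAt_pow 2 x).const_add 1)
    have := (Real.hasDerivAt_sqrt hune).comp x hin
    refine this.congr_deriv ?_
    field_simp [hu]
    ring
  have hden : HasDerivAt (fun x : ℝ => 1 + Real.sqrt (1 + x^2)) (x / u) x := by
    simpa using hsq.const_add 1
  have h := (hasDerivAt_id x).div hden (by positivity : (0:ℝ) < 1 + u).ne'
  refine h.congr_deriv ?_
  rw [← hu, id_eq]
  field_simp
  nlinarith [hu2]

/-- Riccati form of V' for x ≠ 0. -/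
lemma V_deriv_riccati {x : ℝ} (hx : x ≠ 0) :
    (MM x * DD x - NN x ^ 2) / (DD x)^2 = 1 - V x / x - (V x)^2 := by
  have hM : MM x = DD x - NN x / x := by
    have := ibp x
    field_simp
    nlinarith [ibp x]
  rw [hM, V_eq]
  have hD := (DD_pos x).ne'
  field_simp

/-- antiderivative of V + W -/
noncomputable def AA (x : ℝ) : ℝ := ∫ t in (1:ℝ)..x, (V t + W t)

lemma AA_hasDeriv (x : ℝ) : HasDerivAt AA (V x + W x) x := by
  apply intervalIntegral.integral_hasDerivAt_right
    ((V_cont.add W_cont).intervalIntegrable _ _)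
    ((V_cont.add W_cont).stronglyMeasurableAtFilter _ _)
    (V_cont.add W_cont).continuousAt

noncomputable def Phi (x : ℝ) : ℝ := x * Real.exp (AA x) * (V x - W x)

lemma Phi_hasDeriv (x : ℝ) :
    HasDerivAt Phi
      ((Real.exp (AA x) + x * Real.exp (AA x) * (V x + W x)) * (V x - W x)
        + x * Real.exp (AA x) * ((MM x * DD x - NN x ^ 2) / (DD x)^2
            - 1 / (Real.sqrt (1 + x^2) * (1 + Real.sqrt (1 + x^2))))) x := by
  have h1 : HasDerivAt (fun x => x * Real.exp (AA x))
      (Real.exp (AA x) + x * Real.exp (AA x) * (V x + W x)) x := by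
    have := (hasDerivAt_id x).mul ((AA_hasDeriv x).exp)
    refine this.congr_deriv ?_
    simp only [id_eq]
    ring
  exact h1.mul ((V_hasDeriv x).sub (W_hasDeriv x))

lemma Phi_deriv_pos {x : ℝ} (hx : 0 < x) :
    0 < (Real.exp (AA x) + x * Real.exp (AA x) * (V x + W x)) * (V x - W x)
        + x * Real.exp (AA x) * ((MM x * DD x - NN x ^ 2) / (DD x)^2
            - 1 / (Real.sqrt (1 + x^2) * (1 + Real.sqrt (1 + x^2)))) := by
  set u := Real.sqrt (1 + x^2) with hu
  have hu2 : u^2 = 1 + x^2 := u_sq x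
  have hu1 : 1 < u := u_gt_one hx
  rw [V_deriv_riccati hx.ne']
  have hW : W x = x / (1 + u) := rfl
  -- the expression equals exp(AA x) * (x - W - x*W^2 - x*W')
  have key : (Real.exp (AA x) + x * Real.exp (AA x) * (V x + W x)) * (V x - W x)
      + x * Real.exp (AA x) * ((1 - V x / x - (V x)^2) - 1 / (u * (1 + u)))
      = Real.exp (AA x) * (x * (u - 1) / (u * (1 + u))) := by
    rw [hW]
    have h1 : (1:ℝ) + u ≠ 0 := by positivity
    have h2 : u ≠ 0 := by positivity
    field_simp
    linear_combination (x * u) * hu2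
  rw [key]
  have : 0 < x * (u - 1) / (u * (1 + u)) := by
    apply div_pos (by nlinarith) (by nlinarith)
  positivity



lemma Phi_cont : Continuous Phi :=
  continuous_iff_continuousAt.2 fun x => (Phi_hasDeriv x).differentiableAt.continuousAt

lemma V_gt_W {x : ℝ} (hx : 0 < x) : W x < V x := by
  have hmono : StrictMonoOn Phi (Ici 0) := by
    apply strictMonoOn_of_deriv_pos (convex_Ici 0) Phi_cont.continuousOn
    intro y hy
    rw [interior_Ici] at hy
    rw [(Phi_hasDeriv y).deriv]
    exact Phi_deriv_pos hy
  have h0 : Phi 0 = 0 := by simp [Phi]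
  have := hmono (self_mem_Ici) (le_of_lt hx : (0:ℝ) ≤ x) hx
  rw [h0] at this
  have hpos : 0 < x * Real.exp (AA x) := by positivity
  simp only [Phi] at this
  by_contra h
  push_neg at h
  nlinarith [this, mul_nonpos_of_nonneg_of_nonpos hpos.le (by linarith : V x - W x ≤ 0)]

lemma W_pos {x : ℝ} (hx : 0 < x) : 0 < W x := by
  have := u_ge_one x
  rw [W]; positivity

lemma W_identity {x : ℝ} (hx : 0 < x) : x * (W x)^2 + 2 * W x = x := by
  have hu2 := u_sq x
  have hu1 := u_ge_one x
  rw [W]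
  have h1 : (1:ℝ) + Real.sqrt (1 + x^2) ≠ 0 := by positivity
  field_simp
  linear_combination (-1) * hu2

lemma g_strictAnti : StrictAntiOn (fun x => V x / x) (Ioi 0) := by
  apply strictAntiOn_of_deriv_neg (convex_Ioi 0)
  · exact (V_cont.continuousOn.div continuousOn_id fun x hx => ne_of_gt hx)
  · intro x hx
    rw [interior_Ioi] at hx
    have hx' : (0:ℝ) < x := hx
    have hder : HasDerivAt (fun x => V x / x)
        (((MM x * DD x - NN x ^ 2) / (DD x)^2 * x - V x * 1) / x^2) x :=
      (V_hasDeriv x).div (hasDerivAt_id x) hx'.ne'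
    rw [hder.deriv, V_deriv_riccati hx'.ne']
    have hVW := V_gt_W hx'
    have hW := W_pos hx'
    have hid := W_identity hx'
    have hnum : (1 - V x / x - (V x)^2) * x - V x * 1 < 0 := by
      have hexp : (1 - V x / x - (V x)^2) * x - V x * 1 = x - 2 * V x - x * (V x)^2 := by
        field_simp; ring
      rw [hexp]
      nlinarith [hid, mul_pos hx' (mul_pos (sub_pos.2 hVW) (by linarith : (0:ℝ) < V x + W x))]
    apply div_neg_of_neg_of_pos hnum (by positivity)

lemma sol_c_pos {c r : ℝ} (hr : r ∈ Ioo (0:ℝ) 1) (heq : r = V (c * r)) : 0 < c := by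
  by_contra h
  push_neg at h
  have hcr : c * r ≤ 0 := mul_nonpos_of_nonpos_of_nonneg h hr.1.le
  have : V (c * r) ≤ V 0 := V_strictMono.monotone (by linarith)
  rw [V_zero] at this
  linarith [hr.1]

lemma sol_unique {c r r' : ℝ} (hr : r ∈ Ioo (0:ℝ) 1) (hr' : r' ∈ Ioo (0:ℝ) 1)
    (heq : r = V (c * r)) (heq' : r' = V (c * r')) : r = r' := by
  have hc : 0 < c := sol_c_pos hr heq
  have h1 : 0 < c * r := mul_pos hc hr.1
  have h2 : 0 < c * r' := mul_pos hc hr'.1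
  have g1 : V (c * r) / (c * r) = 1 / c := by
    rw [← heq]; field_simp [hr.1.ne']
  have g2 : V (c * r') / (c * r') = 1 / c := by
    rw [← heq']; field_simp [hr'.1.ne']
  by_contra hne
  rcases lt_or_gt_of_ne (fun h => hne (mul_left_cancel₀ hc.ne' h) : c * r ≠ c * r') with h | h
  · have := g_strictAnti h1 h2 h
    change V (c * r') / (c * r') < V (c * r) / (c * r) at this
    rw [g1, g2] at this; exact lt_irrefl _ this
  · have := g_strictAnti h2 h1 h
    change V (c * r) / (c * r) < V (c * r') / (c * r') at this
    rw [g1, g2] at this; exact lt_irrefl _ this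

lemma sol_exists {C : ℝ} (hC : 2 < C) : ∃ r : ℝ, r ∈ Ioo (0:ℝ) 1 ∧ r = V (C * r) := by
  set r₀ := Real.sqrt ((C - 2)/C) with hr₀
  have hCpos : (0:ℝ) < C := by linarith
  have hfrac : 0 < (C - 2)/C := div_pos (by linarith) hCpos
  have hr₀pos : 0 < r₀ := Real.sqrt_pos.2 hfrac
  have hr₀sq : r₀^2 = (C - 2)/C := Real.sq_sqrt hfrac.le
  have hr₀lt : r₀ < 1 := by
    nlinarith [hr₀sq, hr₀pos, (div_lt_one hCpos).2 (by linarith : C - 2 < C)]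
  -- W (C * r₀) = r₀
  have hkey : 1 + (C * r₀)^2 = (C - 1)^2 := by
    have : (C * r₀)^2 = C^2 * ((C-2)/C) := by rw [mul_pow, hr₀sq]
    rw [this]; field_simp; ring
  have hsqrt : Real.sqrt (1 + (C * r₀)^2) = C - 1 := by
    rw [hkey]; exact Real.sqrt_sq (by linarith)
  have hW : W (C * r₀) = r₀ := by
    rw [W, hsqrt]
    rw [show (1:ℝ) + (C - 1) = C by ring]
    field_simp
  have hVr₀ : r₀ < V (C * r₀) := by
    have h := V_gt_W (show 0 < C * r₀ by positivity)
    rwa [hW] at h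
  -- IVT on f r = V (C * r) - r
  set f : ℝ → ℝ := fun r => V (C * r) - r with hf
  have hfc : ContinuousOn f (Icc r₀ 1) := ((V_cont.comp (continuous_const.mul continuous_id)).sub continuous_id).continuousOn
  have hmem : (0:ℝ) ∈ Icc (f 1) (f r₀) := by
    constructor
    · simp only [hf, mul_one]
      linarith [V_lt_one C]
    · simp only [hf]
      linarith [hVr₀]
  obtain ⟨r, hrIcc, hfr⟩ := intermediate_value_Icc' hr₀lt.le hfc hmem
  refine ⟨r, ⟨lt_of_lt_of_le hr₀pos hrIcc.1, lt_of_le_of_ne hrIcc.2 ?_⟩, by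
    have : V (C * r) - r = 0 := hfr
    linarith⟩
  intro h
  rw [h] at hfr
  have : V (C * 1) - 1 = 0 := hfr
  simp only [mul_one] at this
  linarith [V_lt_one C]

theorem symmetric_solution_unique_up_to_class :
    (∀ K₁ K₂ L₁ L₂ K₁' K₂' L₁' L₂' r r' : ℝ,
      r ∈ Ioo (0:ℝ) 1 → r' ∈ Ioo (0:ℝ) 1 →
      r = V ((K₁ + L₁) * r) → r = V ((K₂ + L₂) * r) →
      r' = V ((K₁' + L₁') * r') → r' = V ((K₂' + L₂') * r') →
      (r = r' ↔ K₁ + L₁ = K₁' + L₁')) ∧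
    (∀ C : ℝ, 2 < C → ∃! r : ℝ, r ∈ Ioo (0:ℝ) 1 ∧ r = V (C * r)) ∧
    (∀ C C' rC rC' : ℝ, 2 < C → 2 < C' →
      rC ∈ Ioo (0:ℝ) 1 → rC' ∈ Ioo (0:ℝ) 1 →
      rC = V (C * rC) → rC' = V (C' * rC') →
      C < C' → rC < rC') := by
  refine ⟨?_, ?_, ?_⟩
  · intro K₁ K₂ L₁ L₂ K₁' K₂' L₁' L₂' r r' hr hr' h1 _ h3 _
    constructor
    · intro hrr
      subst hrr
      have : V ((K₁ + L₁) * r) = V ((K₁' + L₁') * r) := by rw [← h1, ← h3]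
      have := V_strictMono.injective this
      exact mul_right_cancel₀ hr.1.ne' this
    · intro hKL
      rw [hKL] at h1
      exact sol_unique hr hr' h1 h3
  · intro C hC
    obtain ⟨r, hr, heq⟩ := sol_exists hC
    exact ⟨r, ⟨hr, heq⟩, fun y ⟨hy, hyeq⟩ => sol_unique hy hr hyeq heq⟩
  · intro C C' rC rC' hC hC' hrC hrC' heq heq' hlt
    have h1 : 0 < C * rC := mul_pos (by linarith) hrC.1
    have h2 : 0 < C' * rC' := mul_pos (by linarith) hrC'.1
    have g1 : V (C * rC) / (C * rC) = 1 / C := by rw [← heq]; field_simp [hrC.1.ne']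
    have g2 : V (C' * rC') / (C' * rC') = 1 / C' := by rw [← heq']; field_simp [hrC'.1.ne']
    have hargs : C * rC < C' * rC' := by
      by_contra h
      push_neg at h
      rcases eq_or_lt_of_le h with he | hlt2
      · have : (1:ℝ)/C = 1/C' := by rw [← g1, ← g2, he]
        have : C = C' := by
          field_simp at this
          linarith
        linarith
      · have := g_strictAnti h2 h1 hlt2
        change V (C * rC) / (C * rC) < V (C' * rC') / (C' * rC') at this
        rw [g1, g2] at this
        have hCC : 1/C' < 1/C := one_div_lt_one_div_of_lt (by linarith) hlt
        linarith
    calc rC = V (C * rC) := heq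
      _ < V (C' * rC') := V_strictMono hargs
      _ = rC' := heq'.symm
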